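/- arXiv:2006.16887 — 2 statements merged into one kernel-verified Lean document; each statement's English description precedes it below -/
import Mathlib

section
/- For any two graphs G₁, G₂, the complete thinness of their disjoint union satisfies compthin(G₁ ∪ G₂) = compthin(G₁) + compthin(G₂), and likewise for the complete proper thinness. -/
open SimpleGraph

/-- An ordering (given by an injective rank function `f`) and a partition (given by a
coloring `c`) are consistent: for `r < s < t`, if `r, s` are in the same class and
`t` is adjacent to `r`, then `t` is adjacent to `s`. -/
def Consistent {V : Type*} (G : SimpleGraph V) (f : V → ℕ) (c : V → ℕ) : Prop :=
  ∀ r s t : V, f r < f s → f s < f t → c r = c s → G.Adj t r → G.Adj t s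

/-- Strong consistency: consistency with the ordering and with its reverse. -/
def StronglyConsistent {V : Type*} (G : SimpleGraph V) (f : V → ℕ) (c : V → ℕ) : Prop :=
  Consistent G f c ∧
    ∀ r s t : V, f r < f s → f s < f t → c s = c t → G.Adj t r → G.Adj s r

/-- The thinness of a graph. -/
noncomputable def thin {V : Type*} (G : SimpleGraph V) : ℕ :=
  sInf {k | ∃ f c : V → ℕ, Function.Injective f ∧ (∀ v, c v < k) ∧ Consistent G f c}

/-- The proper thinness of a graph. -/
noncomputable def pthin {V : Type*} (G : SimpleGraph V) : ℕ :=
  sInf {k | ∃ f c : V → ℕ, Function.Injective f ∧ (∀ v, c v < k) ∧ StronglyConsistent G f c}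

/-- Independent thinness: classes must be independent sets. -/
noncomputable def indthin {V : Type*} (G : SimpleGraph V) : ℕ :=
  sInf {k | ∃ f c : V → ℕ, Function.Injective f ∧ (∀ v, c v < k) ∧ Consistent G f c ∧
    ∀ u v : V, c u = c v → ¬ G.Adj u v}

/-- Independent proper thinness. -/
noncomputable def indpthin {V : Type*} (G : SimpleGraph V) : ℕ :=
  sInf {k | ∃ f c : V → ℕ, Function.Injective f ∧ (∀ v, c v < k) ∧ StronglyConsistent G f c ∧
    ∀ u v : V, c u = c v → ¬ G.Adj u v}

/-- Complete thinness: classes must be cliques. -/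
noncomputable def compthin {V : Type*} (G : SimpleGraph V) : ℕ :=
  sInf {k | ∃ f c : V → ℕ, Function.Injective f ∧ (∀ v, c v < k) ∧ Consistent G f c ∧
    ∀ u v : V, u ≠ v → c u = c v → G.Adj u v}

/-- Complete proper thinness. -/
noncomputable def comppthin {V : Type*} (G : SimpleGraph V) : ℕ :=
  sInf {k | ∃ f c : V → ℕ, Function.Injective f ∧ (∀ v, c v < k) ∧ StronglyConsistent G f c ∧
    ∀ u v : V, u ≠ v → c u = c v → G.Adj u v}

/-- The incompatibility graph `G_<` of a graph and an ordering: for `v < w`,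
`vw` is an edge iff there is `z > w` adjacent to `v` but not to `w`. -/
def incompat {V : Type*} (G : SimpleGraph V) (f : V → ℕ) : SimpleGraph V where
  Adj v w :=
    (f v < f w ∧ ∃ z, f w < f z ∧ G.Adj z v ∧ ¬ G.Adj z w) ∨
    (f w < f v ∧ ∃ z, f v < f z ∧ G.Adj z w ∧ ¬ G.Adj z v)
  symm := ⟨fun v w h => h.symm⟩
  loopless := ⟨fun v h => by rcases h with ⟨h, _⟩ | ⟨h, _⟩ <;> exact lt_irrefl _ h⟩

/-- The join of two graphs. -/
def joinG {V₁ V₂ : Type*} (G₁ : SimpleGraph V₁) (G₂ : SimpleGraph V₂) :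
    SimpleGraph (V₁ ⊕ V₂) where
  Adj x y := match x, y with
    | Sum.inl u, Sum.inl v => G₁.Adj u v
    | Sum.inr u, Sum.inr v => G₂.Adj u v
    | Sum.inl _, Sum.inr _ => True
    | Sum.inr _, Sum.inl _ => True
  symm := by refine ⟨?_⟩; rintro (u | u) (v | v) h
             · exact G₁.adj_symm h
             · trivial
             · trivial
             · exact G₂.adj_symm h
  loopless := by refine ⟨?_⟩; rintro (u | u) h
                 · exact G₁.loopless.irrefl u h
                 · exact G₂.loopless.irrefl u h

/-- A graph is complete iff all pairs of distinct vertices are adjacent. -/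
def IsCompleteGraph {V : Type*} (G : SimpleGraph V) : Prop :=
  ∀ u v : V, u ≠ v → G.Adj u v

/-- The clique number of a graph. -/
noncomputable def omegaNum {V : Type*} (G : SimpleGraph V) : ℕ :=
  sSup {n | ∃ s : Finset V, s.card = n ∧ ∀ u ∈ s, ∀ v ∈ s, u ≠ v → G.Adj u v}

/-- The independence number of a graph. -/
noncomputable def alphaNum {V : Type*} (G : SimpleGraph V) : ℕ :=
  sSup {n | ∃ s : Finset V, s.card = n ∧ ∀ u ∈ s, ∀ v ∈ s, u ≠ v → ¬ G.Adj u v}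


/-- Witness predicate for complete thinness. -/
def CTWit {V : Type*} (G : SimpleGraph V) (k : ℕ) : Prop :=
  ∃ f c : V → ℕ, Function.Injective f ∧ (∀ v, c v < k) ∧ Consistent G f c ∧
    ∀ u v : V, u ≠ v → c u = c v → G.Adj u v

/-- Witness predicate for complete proper thinness. -/
def CPTWit {V : Type*} (G : SimpleGraph V) (k : ℕ) : Prop :=
  ∃ f c : V → ℕ, Function.Injective f ∧ (∀ v, c v < k) ∧ StronglyConsistent G f c ∧
    ∀ u v : V, u ≠ v → c u = c v → G.Adj u v

lemma cptwit_card {V : Type*} [Fintype V] (G : SimpleGraph V) :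
    CPTWit G (Fintype.card V) := by
  refine ⟨fun v => ((Fintype.equivFin V) v : ℕ), fun v => ((Fintype.equivFin V) v : ℕ),
    ?_, ?_, ⟨?_, ?_⟩, ?_⟩
  · intro a b h
    exact (Fintype.equivFin V).injective (Fin.ext h)
  · intro v; exact ((Fintype.equivFin V) v).2
  · intro r s t h1 h2 hc _
    exact absurd h1 (by rw [hc]; exact lt_irrefl _)
  · intro r s t h1 h2 hc _
    exact absurd h2 (by rw [hc]; exact lt_irrefl _)
  · intro u v hne hc
    exact absurd ((Fintype.equivFin V).injective (Fin.ext hc)) hne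

lemma ctwit_card {V : Type*} [Fintype V] (G : SimpleGraph V) :
    CTWit G (Fintype.card V) := by
  obtain ⟨f, c, hf, hb, hsc, hcl⟩ := cptwit_card G
  exact ⟨f, c, hf, hb, hsc.1, hcl⟩

/-- Rank of an element within a finite set of naturals. -/
private def rnk (C : Finset ℕ) (m : ℕ) : ℕ := (C.filter (· < m)).card

private lemma rnk_lt {C : Finset ℕ} {m : ℕ} (hm : m ∈ C) : rnk C m < C.card := by
  apply Finset.card_lt_card
  rw [Finset.ssubset_iff_of_subset (Finset.filter_subset _ _)]
  exact ⟨m, hm, by simp⟩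

private lemma rnk_strictmono {C : Finset ℕ} {m n : ℕ} (hm : m ∈ C) (h : m < n) :
    rnk C m < rnk C n := by
  apply Finset.card_lt_card
  constructor
  · intro x hx
    simp only [Finset.mem_filter] at hx ⊢
    exact ⟨hx.1, lt_trans hx.2 h⟩
  · intro hsub
    have := hsub (by simp only [Finset.mem_filter]; exact ⟨hm, h⟩)
    simp at this

private lemma rnk_inj {C : Finset ℕ} {m n : ℕ} (hm : m ∈ C) (hn : n ∈ C)
    (h : rnk C m = rnk C n) : m = n := by
  rcases lt_trichotomy m n with hlt | heq | hlt
  · exact absurd h (ne_of_lt (rnk_strictmono hm hlt))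
  · exact heq
  · exact absurd h.symm (ne_of_lt (rnk_strictmono hn hlt))

/-- Restriction of a complete-thinness witness along an adjacency-preserving injection. -/
lemma ctwit_restrict {V W : Type*} [Fintype W] {G : SimpleGraph V} {H : SimpleGraph W}
    (ι : W → V) (hι : Function.Injective ι)
    (hadj : ∀ u v, G.Adj (ι u) (ι v) ↔ H.Adj u v)
    (f c : V → ℕ) (hf : Function.Injective f)
    (hcon : Consistent G f c)
    (hcl : ∀ u v : V, u ≠ v → c u = c v → G.Adj u v) :
    CTWit H (Finset.image (fun w => c (ι w)) Finset.univ).card := by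
  set C : Finset ℕ := Finset.image (fun w => c (ι w)) Finset.univ with hC
  have hmem : ∀ w : W, c (ι w) ∈ C := by
    intro w; rw [hC]; exact Finset.mem_image_of_mem _ (Finset.mem_univ w)
  refine ⟨fun w => f (ι w), fun w => rnk C (c (ι w)), ?_, ?_, ?_, ?_⟩
  · intro a b h; exact hι (hf h)
  · intro w; exact rnk_lt (hmem w)
  · intro r s t h1 h2 hc hAdj
    have hceq : c (ι r) = c (ι s) := rnk_inj (hmem r) (hmem s) hc
    exact (hadj t s).mp (hcon (ι r) (ι s) (ι t) h1 h2 hceq ((hadj t r).mpr hAdj))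
  · intro u v hne hc
    have hceq : c (ι u) = c (ι v) := rnk_inj (hmem u) (hmem v) hc
    exact (hadj u v).mp (hcl (ι u) (ι v) (fun h => hne (hι h)) hceq)

/-- Restriction of a complete-proper-thinness witness. -/
lemma cptwit_restrict {V W : Type*} [Fintype W] {G : SimpleGraph V} {H : SimpleGraph W}
    (ι : W → V) (hι : Function.Injective ι)
    (hadj : ∀ u v, G.Adj (ι u) (ι v) ↔ H.Adj u v)
    (f c : V → ℕ) (hf : Function.Injective f)
    (hcon : StronglyConsistent G f c)
    (hcl : ∀ u v : V, u ≠ v → c u = c v → G.Adj u v) :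
    CPTWit H (Finset.image (fun w => c (ι w)) Finset.univ).card := by
  obtain ⟨f', c', h1, h2, h3, h4⟩ := ctwit_restrict ι hι hadj f c hf hcon.1 hcl
  set C : Finset ℕ := Finset.image (fun w => c (ι w)) Finset.univ with hC
  have hmem : ∀ w : W, c (ι w) ∈ C := by
    intro w; rw [hC]; exact Finset.mem_image_of_mem _ (Finset.mem_univ w)
  refine ⟨fun w => f (ι w), fun w => rnk C (c (ι w)), fun a b h => hι (hf h),
    fun w => rnk_lt (hmem w), ⟨?_, ?_⟩, ?_⟩
  · intro r s t ha hb hc hAdj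
    have hceq : c (ι r) = c (ι s) := rnk_inj (hmem r) (hmem s) hc
    exact (hadj t s).mp (hcon.1 (ι r) (ι s) (ι t) ha hb hceq ((hadj t r).mpr hAdj))
  · intro r s t ha hb hc hAdj
    have hceq : c (ι s) = c (ι t) := rnk_inj (hmem s) (hmem t) hc
    exact (hadj s r).mp (hcon.2 (ι r) (ι s) (ι t) ha hb hceq ((hadj t r).mpr hAdj))
  · intro u v hne hc
    have hceq : c (ι u) = c (ι v) := rnk_inj (hmem u) (hmem v) hc
    exact (hadj u v).mp (hcl (ι u) (ι v) (fun h => hne (hι h)) hceq)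

/-- Combining witnesses on a disjoint sum (proper version; implies the plain one). -/
lemma cptwit_sum {V₁ V₂ : Type*} [Fintype V₁]
    {G₁ : SimpleGraph V₁} {G₂ : SimpleGraph V₂} {k₁ k₂ : ℕ}
    (h₁ : CPTWit G₁ k₁) (h₂ : CPTWit G₂ k₂) : CPTWit (G₁ ⊕g G₂) (k₁ + k₂) := by
  obtain ⟨f₁, c₁, hf₁, hb₁, ⟨hcon₁, hrev₁⟩, hcl₁⟩ := h₁
  obtain ⟨f₂, c₂, hf₂, hb₂, ⟨hcon₂, hrev₂⟩, hcl₂⟩ := h₂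
  set N : ℕ := (Finset.univ.sup f₁) + 1 with hNdef
  have hN : ∀ v, f₁ v < N := fun v =>
    Nat.lt_succ_of_le (Finset.le_sup (Finset.mem_univ v))
  refine ⟨Sum.elim f₁ (fun v => N + f₂ v), Sum.elim c₁ (fun v => k₁ + c₂ v),
    ?_, ?_, ⟨?_, ?_⟩, ?_⟩
  · rintro (a | a) (b | b) h <;> simp only [Sum.elim_inl, Sum.elim_inr] at h
    · exact congrArg Sum.inl (hf₁ h)
    · exact absurd h (by have := hN a; omega)
    · exact absurd h (by have := hN b; omega)
    · exact congrArg Sum.inr (hf₂ (by omega))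
  · rintro (v | v) <;> simp only [Sum.elim_inl, Sum.elim_inr]
    · exact lt_of_lt_of_le (hb₁ v) (Nat.le_add_right k₁ k₂)
    · exact Nat.add_lt_add_left (hb₂ v) k₁
  · rintro (r | r) (s | s) (t | t) h1 h2 hc hAdj <;>
      simp only [Sum.elim_inl, Sum.elim_inr, SimpleGraph.sum_adj] at h1 h2 hc hAdj ⊢
    · exact hcon₁ r s t h1 h2 hc hAdj
    · exact absurd hc (by have := hb₁ r; omega)
    · exact absurd hc (by have := hb₁ s; omega)
    · exact hcon₂ r s t (by omega) (by omega) (by omega) hAdj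
  · rintro (r | r) (s | s) (t | t) h1 h2 hc hAdj <;>
      simp only [Sum.elim_inl, Sum.elim_inr, SimpleGraph.sum_adj] at h1 h2 hc hAdj ⊢
    · exact hrev₁ r s t h1 h2 hc hAdj
    · exact absurd hc (by have := hb₁ t; omega)
    · exact absurd hc (by have := hb₁ s; omega)
    · exact hrev₂ r s t (by omega) (by omega) (by omega) hAdj
  · rintro (u | u) (v | v) hne hc <;>
      simp only [Sum.elim_inl, Sum.elim_inr, SimpleGraph.sum_adj] at hc ⊢
    · exact hcl₁ u v (fun h => hne (congrArg Sum.inl h)) hc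
    · exact absurd hc (by have := hb₁ u; omega)
    · exact absurd hc (by have := hb₁ v; omega)
    · exact hcl₂ u v (fun h => hne (congrArg Sum.inr h)) (by omega)

lemma ctwit_sum {V₁ V₂ : Type*} [Fintype V₁]
    {G₁ : SimpleGraph V₁} {G₂ : SimpleGraph V₂} {k₁ k₂ : ℕ}
    (h₁ : CTWit G₁ k₁) (h₂ : CTWit G₂ k₂) : CTWit (G₁ ⊕g G₂) (k₁ + k₂) := by
  obtain ⟨f₁, c₁, hf₁, hb₁, hcon₁, hcl₁⟩ := h₁
  obtain ⟨f₂, c₂, hf₂, hb₂, hcon₂, hcl₂⟩ := h₂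
  set N : ℕ := (Finset.univ.sup f₁) + 1 with hNdef
  have hN : ∀ v, f₁ v < N := fun v =>
    Nat.lt_succ_of_le (Finset.le_sup (Finset.mem_univ v))
  refine ⟨Sum.elim f₁ (fun v => N + f₂ v), Sum.elim c₁ (fun v => k₁ + c₂ v),
    ?_, ?_, ?_, ?_⟩
  · rintro (a | a) (b | b) h <;> simp only [Sum.elim_inl, Sum.elim_inr] at h
    · exact congrArg Sum.inl (hf₁ h)
    · exact absurd h (by have := hN a; omega)
    · exact absurd h (by have := hN b; omega)
    · exact congrArg Sum.inr (hf₂ (by omega))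
  · rintro (v | v) <;> simp only [Sum.elim_inl, Sum.elim_inr]
    · exact lt_of_lt_of_le (hb₁ v) (Nat.le_add_right k₁ k₂)
    · exact Nat.add_lt_add_left (hb₂ v) k₁
  · rintro (r | r) (s | s) (t | t) h1 h2 hc hAdj <;>
      simp only [Sum.elim_inl, Sum.elim_inr, SimpleGraph.sum_adj] at h1 h2 hc hAdj ⊢
    · exact hcon₁ r s t h1 h2 hc hAdj
    · exact absurd hc (by have := hb₁ r; omega)
    · exact absurd hc (by have := hb₁ s; omega)
    · exact hcon₂ r s t (by omega) (by omega) (by omega) hAdj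
  · rintro (u | u) (v | v) hne hc <;>
      simp only [Sum.elim_inl, Sum.elim_inr, SimpleGraph.sum_adj] at hc ⊢
    · exact hcl₁ u v (fun h => hne (congrArg Sum.inl h)) hc
    · exact absurd hc (by have := hb₁ u; omega)
    · exact absurd hc (by have := hb₁ v; omega)
    · exact hcl₂ u v (fun h => hne (congrArg Sum.inr h)) (by omega)

lemma compthin_eq_sInf {V : Type*} (G : SimpleGraph V) :
    compthin G = sInf {k | CTWit G k} := rfl

lemma comppthin_eq_sInf {V : Type*} (G : SimpleGraph V) :
    comppthin G = sInf {k | CPTWit G k} := rfl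

lemma ctwit_compthin {V : Type*} [Fintype V] (G : SimpleGraph V) :
    CTWit G (compthin G) := by
  have hmem : Fintype.card V ∈ {k | CTWit G k} := ctwit_card G
  have h := Nat.sInf_mem ⟨_, hmem⟩
  exact h

lemma cptwit_comppthin {V : Type*} [Fintype V] (G : SimpleGraph V) :
    CPTWit G (comppthin G) := by
  have hmem : Fintype.card V ∈ {k | CPTWit G k} := cptwit_card G
  have h := Nat.sInf_mem ⟨_, hmem⟩
  exact h

lemma card_color_sum {V₁ V₂ : Type*} [Fintype V₁] [Fintype V₂]
    {G₁ : SimpleGraph V₁} {G₂ : SimpleGraph V₂} {k : ℕ} (c : V₁ ⊕ V₂ → ℕ)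
    (hb : ∀ v, c v < k)
    (hcl : ∀ u v, u ≠ v → c u = c v → (G₁ ⊕g G₂).Adj u v) :
    (Finset.image (fun w => c (Sum.inl w)) Finset.univ).card +
      (Finset.image (fun w => c (Sum.inr w)) Finset.univ).card ≤ k := by
  set C₁ := Finset.image (fun w => c (Sum.inl w)) Finset.univ with hC₁
  set C₂ := Finset.image (fun w => c (Sum.inr w)) Finset.univ with hC₂
  have hdisj : Disjoint C₁ C₂ := by
    rw [Finset.disjoint_left]
    intro m h1 h2
    rw [hC₁, Finset.mem_image] at h1
    rw [hC₂, Finset.mem_image] at h2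
    obtain ⟨u, -, hu⟩ := h1
    obtain ⟨v, -, hv⟩ := h2
    have := hcl (Sum.inl u) (Sum.inr v) (by simp) (hu.trans hv.symm)
    simp [SimpleGraph.sum_adj] at this
  have hsub : C₁ ∪ C₂ ⊆ Finset.range k := by
    intro m hm
    rw [Finset.mem_union] at hm
    rw [Finset.mem_range]
    rcases hm with hm | hm
    · rw [hC₁, Finset.mem_image] at hm
      obtain ⟨u, -, hu⟩ := hm
      exact hu ▸ hb _
    · rw [hC₂, Finset.mem_image] at hm
      obtain ⟨u, -, hu⟩ := hm
      exact hu ▸ hb _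
  calc C₁.card + C₂.card = (C₁ ∪ C₂).card := (Finset.card_union_of_disjoint hdisj).symm
    _ ≤ (Finset.range k).card := Finset.card_le_card hsub
    _ = k := Finset.card_range k

/-- Complete (proper) thinness of a disjoint union is the sum of the complete (proper)
thinnesses. -/
theorem compthin_sum {V₁ V₂ : Type*} [Fintype V₁] [Fintype V₂]
    (G₁ : SimpleGraph V₁) (G₂ : SimpleGraph V₂) :
    compthin (G₁ ⊕g G₂) = compthin G₁ + compthin G₂ ∧
    comppthin (G₁ ⊕g G₂) = comppthin G₁ + comppthin G₂ := by
  have hadj₁ : ∀ u v : V₁, (G₁ ⊕g G₂).Adj (Sum.inl u) (Sum.inl v) ↔ G₁.Adj u v := by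
    intro u v; simp [SimpleGraph.sum_adj]
  have hadj₂ : ∀ u v : V₂, (G₁ ⊕g G₂).Adj (Sum.inr u) (Sum.inr v) ↔ G₂.Adj u v := by
    intro u v; simp [SimpleGraph.sum_adj]
  constructor
  · apply le_antisymm
    · rw [compthin_eq_sInf (G₁ ⊕g G₂)]
      exact Nat.sInf_le (ctwit_sum (ctwit_compthin G₁) (ctwit_compthin G₂))
    · obtain ⟨f, c, hf, hb, hcon, hcl⟩ := ctwit_compthin (G₁ ⊕g G₂)
      have h1 := ctwit_restrict Sum.inl Sum.inl_injective hadj₁ f c hf hcon hcl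
      have h2 := ctwit_restrict Sum.inr Sum.inr_injective hadj₂ f c hf hcon hcl
      have hle1 : compthin G₁ ≤ _ := (compthin_eq_sInf G₁) ▸ Nat.sInf_le h1
      have hle2 : compthin G₂ ≤ _ := (compthin_eq_sInf G₂) ▸ Nat.sInf_le h2
      have := card_color_sum (G₁ := G₁) (G₂ := G₂) c hb hcl
      omega
  · apply le_antisymm
    · rw [comppthin_eq_sInf (G₁ ⊕g G₂)]
      exact Nat.sInf_le (cptwit_sum (cptwit_comppthin G₁) (cptwit_comppthin G₂))
    · obtain ⟨f, c, hf, hb, hcon, hcl⟩ := cptwit_comppthin (G₁ ⊕g G₂)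
      have h1 := cptwit_restrict Sum.inl Sum.inl_injective hadj₁ f c hf hcon hcl
      have h2 := cptwit_restrict Sum.inr Sum.inr_injective hadj₂ f c hf hcon hcl
      have hle1 : comppthin G₁ ≤ _ := (comppthin_eq_sInf G₁) ▸ Nat.sInf_le h1
      have hle2 : comppthin G₂ ≤ _ := (comppthin_eq_sInf G₂) ▸ Nat.sInf_le h2
      have := card_color_sum (G₁ := G₁) (G₂ := G₂) c hb hcl
      omega
end

section
/- For any graphs G₁ and G₂ with G₂ having at least one edge, thin(G₁ × G₂) ≥ ω(G₁)/2, where × denotes the tensor (categorical) product. -/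
open SimpleGraph

/-- The tensor (categorical) product of two graphs. -/
def tensorProd {V₁ V₂ : Type*} (G₁ : SimpleGraph V₁) (G₂ : SimpleGraph V₂) :
    SimpleGraph (V₁ × V₂) where
  Adj x y := G₁.Adj x.1 y.1 ∧ G₂.Adj x.2 y.2
  symm := ⟨fun _ _ h => ⟨h.1.symm, h.2.symm⟩⟩
  loopless := ⟨fun _ h => G₁.loopless.irrefl _ h.1⟩


lemma key_card_le {V₁ V₂ : Type*} (G₁ : SimpleGraph V₁) (G₂ : SimpleGraph V₂)
    {a b : V₂} (hab : G₂.Adj a b) {f c : V₁ × V₂ → ℕ} (hf : Function.Injective f)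
    {k : ℕ} (hck : ∀ v, c v < k) (hcons : Consistent (tensorProd G₁ G₂) f c)
    {s : Finset V₁} (hs : ∀ u ∈ s, ∀ v ∈ s, u ≠ v → G₁.Adj u v)
    (t : Finset V₁) (ht : t ⊆ s) (hlt : ∀ i ∈ t, f (i, a) < f (i, b)) :
    t.card ≤ k := by
  have : t.card ≤ (Finset.range k).card := by
    apply Finset.card_le_card_of_injOn (fun i => c (i, a))
    · intro i _
      simpa using hck (i, a)
    · intro i hi j hj hcij
      simp only [Finset.mem_coe] at hi hj
      by_contra hne
      -- wlog f (i,a) < f (j,a)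
      have hne' : f (i, a) ≠ f (j, a) := fun he => hne (by
        have := hf he; exact (Prod.mk.injEq .. ▸ this).1)
      rcases lt_or_gt_of_ne hne' with hlt' | hlt'
      · have hadj : (tensorProd G₁ G₂).Adj (j, b) (i, a) :=
          ⟨hs j (ht hj) i (ht hi) (Ne.symm hne), hab.symm⟩
        have := hcons (i, a) (j, a) (j, b) hlt' (hlt j hj) hcij hadj
        exact G₁.loopless.irrefl j this.1
      · have hadj : (tensorProd G₁ G₂).Adj (i, b) (j, a) :=
          ⟨hs i (ht hi) j (ht hj) hne, hab.symm⟩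
        have := hcons (j, a) (i, a) (i, b) hlt' (hlt i hi) hcij.symm hadj
        exact G₁.loopless.irrefl i this.1
  simpa using this

/-- If `G₂` has at least one edge, then `thin (G₁ × G₂) ≥ ω(G₁)/2`. -/
theorem thin_tensorProd_ge {V₁ V₂ : Type*} [Fintype V₁] [Fintype V₂]
    (G₁ : SimpleGraph V₁) (G₂ : SimpleGraph V₂) (h : ∃ a b : V₂, G₂.Adj a b) :
    omegaNum G₁ ≤ 2 * thin (tensorProd G₁ G₂) := by
  -- the defining set of thin is nonempty
  obtain ⟨a, b, hab⟩ := h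
  set S := {k | ∃ f c : V₁ × V₂ → ℕ, Function.Injective f ∧ (∀ v, c v < k) ∧
      Consistent (tensorProd G₁ G₂) f c} with hS
  have hSne : S.Nonempty := by
    refine ⟨Fintype.card (V₁ × V₂), fun v => (Fintype.equivFin _ v : ℕ),
      fun v => (Fintype.equivFin _ v : ℕ), ?_, fun v => (Fintype.equivFin _ v).isLt, ?_⟩
    · intro u v huv
      exact (Fintype.equivFin _).injective (Fin.val_injective huv)
    · intro r s t hrs _ hcrs _
      exact absurd hrs (by
        have : r = s := (Fintype.equivFin _).injective (Fin.val_injective hcrs)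
        simp [this])
  have hmem : thin (tensorProd G₁ G₂) ∈ S := Nat.sInf_mem hSne
  obtain ⟨f, c, hf, hck, hcons⟩ := hmem
  set k := thin (tensorProd G₁ G₂)
  -- omegaNum is attained
  set T := {n | ∃ s : Finset V₁, s.card = n ∧ ∀ u ∈ s, ∀ v ∈ s, u ≠ v → G₁.Adj u v} with hT
  have hTne : T.Nonempty := ⟨0, ∅, by simp⟩
  have hTbdd : BddAbove T := by
    refine ⟨Fintype.card V₁, fun n hn => ?_⟩
    obtain ⟨s, hcard, _⟩ := hn
    exact hcard ▸ s.card_le_univ.trans (by simp)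
  have homega : omegaNum G₁ ∈ T := Nat.sSup_mem hTne hTbdd
  obtain ⟨s, hcard, hclique⟩ := homega
  -- split the clique by which of (i,a), (i,b) comes first
  set sA := s.filter (fun i => f (i, a) < f (i, b)) with hsA
  set sB := s.filter (fun i => ¬ f (i, a) < f (i, b)) with hsB
  have hsplit : sA.card + sB.card = s.card := Finset.card_filter_add_card_filter_not _
  have hA : sA.card ≤ k := by
    refine key_card_le G₁ G₂ hab hf hck hcons hclique sA (Finset.filter_subset _ _) ?_
    intro i hi
    exact (Finset.mem_filter.mp hi).2
  have hB : sB.card ≤ k := by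
    have hclique' : ∀ u ∈ s, ∀ v ∈ s, u ≠ v → G₁.Adj u v := hclique
    refine key_card_le G₁ G₂ hab.symm hf hck hcons hclique' sB (Finset.filter_subset _ _) ?_
    intro i hi
    have h1 := (Finset.mem_filter.mp hi).2
    have hne : f (i, b) ≠ f (i, a) := fun he => by
      have := hf he
      simp at this
      exact G₂.loopless.irrefl a (this ▸ hab)
    omega
  calc omegaNum G₁ = sA.card + sB.card := by rw [hsplit, hcard]
    _ ≤ 2 * k := by omega
end
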